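/- Let H_B = U_B·Σ_B·V_Bᴴ and H_F = U_F·Σ_F·V_Fᴴ be singular value decompositions with singular values in descending order, where V_B, U_F ∈ ℂ^{N_S×N_S} are unitary. Then for the unitary choice Θ = V_B·U_Fᴴ, the singular values of the indirect channel factor exactly: σ_n(H_B·Θ·H_F) = σ_n(H_B)·σ_n(H_F) for every n ≥ 1. -/

import Mathlib

open Matrix

noncomputable def nthLargest {m : ℕ} (f : Fin m → ℝ) (n : ℕ) : ℝ :=
  if h : 1 ≤ n ∧ n ≤ m then (f ∘ Tuple.sort f) ⟨m - n, by omega⟩ else 0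

noncomputable def nthEig {m : ℕ} (Y : Matrix (Fin m) (Fin m) ℂ) (hY : Y.IsHermitian) (n : ℕ) : ℝ :=
  nthLargest hY.eigenvalues n

open Polynomial

-- charpoly invariance under conjugation
lemma charpoly_conj_aux {m : ℕ} (U N U' : Matrix (Fin m) (Fin m) ℂ)
    (h1 : U * U' = 1) : (U * N * U').charpoly = N.charpoly := by
  have h2 : U' * U = 1 := mul_eq_one_comm.mp h1
  set f := (Polynomial.C : ℂ →+* ℂ[X]).mapMatrix (m := Fin m) with hf
  have hUU' : f U * f U' = 1 := by rw [← _root_.map_mul, h1, _root_.map_one]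
  have hU'U : f U' * f U = 1 := by rw [← _root_.map_mul, h2, _root_.map_one]
  have comm : ∀ P : Matrix (Fin m) (Fin m) ℂ[X],
      P * Matrix.scalar (Fin m) (X : ℂ[X]) = Matrix.scalar (Fin m) (X : ℂ[X]) * P := by
    intro P
    ext i j
    simp [Matrix.scalar_apply, Matrix.mul_diagonal, Matrix.diagonal_mul, mul_comm]
  have key : charmatrix (U * N * U') = f U * charmatrix N * f U' := by
    unfold charmatrix
    rw [_root_.map_mul, _root_.map_mul, Matrix.mul_sub, Matrix.sub_mul]
    congr 1
    rw [comm (f U), Matrix.mul_assoc, hUU', Matrix.mul_one]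
  unfold Matrix.charpoly
  rw [key, Matrix.det_conj_of_mul_eq_one hUU' hU'U]

lemma charpoly_diagonal_fin {m : ℕ} (v : Fin m → ℂ) :
    (Matrix.diagonal v).charpoly = ∏ i, (X - C (v i)) := by
  unfold Matrix.charpoly
  have h : charmatrix (Matrix.diagonal v) = Matrix.diagonal fun i => (X : ℂ[X]) - C (v i) := by
    ext i j
    by_cases h : i = j
    · subst h; simp
    · simp [charmatrix_apply_ne _ _ _ h, Matrix.diagonal_apply_ne _ h]
  rw [h, Matrix.det_diagonal]

lemma roots_prod_X_sub_C_fin {m : ℕ} (v : Fin m → ℂ) :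
    (∏ i, (X - C (v i))).roots = Finset.univ.val.map v := by
  have h := Polynomial.roots_multiset_prod_X_sub_C (Finset.univ.val.map v)
  rw [Multiset.map_map] at h
  rw [Finset.prod_eq_multiset_prod]
  exact h

lemma eigs_perm {m : ℕ} {M U : Matrix (Fin m) (Fin m) ℂ} (e : Fin m → ℝ)
    (hU : U * Uᴴ = 1) (hM : M = U * Matrix.diagonal (fun i => (e i : ℂ)) * Uᴴ)
    (hH : M.IsHermitian) :
    (List.ofFn hH.eigenvalues).Perm (List.ofFn e) := by
  have h1 : M.charpoly = ∏ i, (X - C ((e i : ℂ))) := by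
    rw [hM, charpoly_conj_aux _ _ _ hU, charpoly_diagonal_fin]
  have hW : (hH.eigenvectorUnitary : Matrix (Fin m) (Fin m) ℂ) *
      star (hH.eigenvectorUnitary : Matrix (Fin m) (Fin m) ℂ) = 1 :=
    (Matrix.mem_unitaryGroup_iff).mp hH.eigenvectorUnitary.2
  have h2 : M.charpoly = ∏ i, (X - C ((hH.eigenvalues i : ℂ))) := by
    conv_lhs => rw [hH.spectral_theorem]
    rw [Unitary.conjStarAlgAut_apply, charpoly_conj_aux _ _ _ hW]
    have : Matrix.diagonal (RCLike.ofReal ∘ hH.eigenvalues) =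
        Matrix.diagonal (fun i => ((hH.eigenvalues i : ℝ) : ℂ)) := by
      rfl
    rw [this, charpoly_diagonal_fin]
  have h3 : Finset.univ.val.map (fun i => ((hH.eigenvalues i : ℝ) : ℂ)) =
      Finset.univ.val.map (fun i => ((e i : ℝ) : ℂ)) := by
    rw [← roots_prod_X_sub_C_fin, ← roots_prod_X_sub_C_fin, ← h1, ← h2]
  have h4 : Multiset.map Complex.ofReal (Finset.univ.val.map hH.eigenvalues) =
      Multiset.map Complex.ofReal (Finset.univ.val.map e) := by
    rw [Multiset.map_map, Multiset.map_map]
    exact h3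
  have h5 := Multiset.map_injective Complex.ofReal_injective h4
  rw [Fin.univ_val_map, Fin.univ_val_map] at h5
  exact Multiset.coe_eq_coe.mp h5

lemma comp_sort_eq_of_perm {m : ℕ} {f g : Fin m → ℝ} (h : (List.ofFn f).Perm (List.ofFn g)) :
    f ∘ Tuple.sort f = g ∘ Tuple.sort g := by
  exact List.ofFn_injective (List.Perm.eq_of_sortedLE
    (Tuple.monotone_sort f).sortedLE_ofFn
    (Tuple.monotone_sort g).sortedLE_ofFn
    (((Tuple.sort f).ofFn_comp_perm f).trans
      (h.trans ((Tuple.sort g).ofFn_comp_perm g).symm)))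

lemma nthLargest_congr {m : ℕ} {f g : Fin m → ℝ} (h : (List.ofFn f).Perm (List.ofFn g)) (n : ℕ) :
    nthLargest f n = nthLargest g n := by
  simp only [nthLargest, comp_sort_eq_of_perm h]

lemma nthLargest_of_antitone {m : ℕ} {f : Fin m → ℝ} (hf : ∀ i j : Fin m, i ≤ j → f j ≤ f i)
    {n : ℕ} (h1 : 1 ≤ n) (h2 : n ≤ m) : nthLargest f n = f ⟨n - 1, by omega⟩ := by
  have hmono : Monotone (f ∘ (Fin.revPerm : Equiv.Perm (Fin m))) := by
    intro i j hij
    exact hf _ _ (by simpa [Fin.rev_le_rev] using hij)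
  have hkey := Tuple.unique_monotone (Tuple.monotone_sort f) hmono
  unfold nthLargest
  rw [dif_pos ⟨h1, h2⟩, hkey]
  have hrev : Fin.revPerm (⟨m - n, by omega⟩ : Fin m) = (⟨n - 1, by omega⟩ : Fin m) := by
    apply Fin.ext
    simp only [Fin.revPerm_apply, Fin.val_rev]
    omega
  simp only [Function.comp_apply, hrev]

lemma nthLargest_anti {m : ℕ} {f : Fin m → ℝ} (h0 : ∀ i, 0 ≤ f i) {a b : ℕ}
    (ha : 1 ≤ a) (hab : a ≤ b) : nthLargest f b ≤ nthLargest f a := by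
  unfold nthLargest
  by_cases hb : b ≤ m
  · rw [dif_pos ⟨by omega, hb⟩, dif_pos ⟨ha, by omega⟩]
    exact Tuple.monotone_sort f (Fin.mk_le_mk.mpr (by omega))
  · rw [dif_neg (by omega)]
    split
    · exact h0 _
    · exact le_refl 0

lemma nthLargest_nonneg {m : ℕ} {f : Fin m → ℝ} (h0 : ∀ i, 0 ≤ f i) (n : ℕ) :
    0 ≤ nthLargest f n := by
  unfold nthLargest
  split
  · exact h0 _
  · exact le_refl 0

lemma diagLike_mul {r s t : ℕ} (a b e : ℕ → ℝ)
    (he : ∀ n, n < s → e n = a n * b n) (he' : ∀ n, s ≤ n → e n = 0) :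
    (Matrix.of fun (i : Fin r) (k : Fin s) => if (i : ℕ) = (k : ℕ) then ((a i : ℝ) : ℂ) else 0) *
    (Matrix.of fun (k : Fin s) (j : Fin t) => if (k : ℕ) = (j : ℕ) then ((b k : ℝ) : ℂ) else 0) =
    (Matrix.of fun (i : Fin r) (j : Fin t) => if (i : ℕ) = (j : ℕ) then ((e i : ℝ) : ℂ) else 0)
    := by
  ext i j
  rw [Matrix.mul_apply]
  simp only [Matrix.of_apply]
  by_cases hij : (i : ℕ) = (j : ℕ)
  · rw [if_pos hij]
    by_cases his : (i : ℕ) < s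
    · rw [Finset.sum_eq_single (⟨(i : ℕ), his⟩ : Fin s)]
      · rw [if_pos rfl]
        rw [show ((⟨(i : ℕ), his⟩ : Fin s) : ℕ) = (j : ℕ) from hij, if_pos rfl]
        rw [he _ (show (j : ℕ) < s by omega)]
        push_cast
        rfl
      · intro k _ hk
        rw [if_neg, zero_mul]
        intro hc
        exact hk (Fin.ext hc.symm)
      · intro hmem
        exact absurd (Finset.mem_univ _) hmem
    · rw [Finset.sum_eq_zero, he' _ (by omega), Complex.ofReal_zero]
      intro k _
      rw [if_neg (by omega), zero_mul]
  · rw [if_neg hij, Finset.sum_eq_zero]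
    intro k _
    by_cases h1 : (i : ℕ) = (k : ℕ)
    · rw [if_neg (show ¬(k : ℕ) = (j : ℕ) by omega), mul_zero]
    · rw [if_neg h1, zero_mul]

lemma diagLike_conjTranspose {r c : ℕ} (d : ℕ → ℝ) :
    (Matrix.of fun (i : Fin r) (j : Fin c) =>
      if (i : ℕ) = (j : ℕ) then ((d i : ℝ) : ℂ) else 0)ᴴ =
    Matrix.of fun (j : Fin c) (i : Fin r) =>
      if (j : ℕ) = (i : ℕ) then ((d j : ℝ) : ℂ) else 0 := by
  ext j i
  simp only [Matrix.conjTranspose_apply, Matrix.of_apply]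
  by_cases h : (i : ℕ) = (j : ℕ)
  · rw [if_pos h, if_pos h.symm, h]
    exact Complex.conj_ofReal _
  · rw [if_neg h, if_neg (fun hc => h hc.symm), star_zero]

lemma diagLike_eq_diagonal {r : ℕ} (e : ℕ → ℝ) :
    (Matrix.of fun (i j : Fin r) => if (i : ℕ) = (j : ℕ) then ((e i : ℝ) : ℂ) else 0) =
    Matrix.diagonal (fun i : Fin r => ((e i : ℝ) : ℂ)) := by
  ext i j
  simp only [Matrix.of_apply, Matrix.diagonal_apply, Fin.val_eq_val]


/-- The `n`-th largest singular value (1-based) of a complex matrix, equal to the square root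
of the `n`-th largest eigenvalue of `A * Aᴴ`, with the convention that it is `0` whenever
`n` exceeds the matrix dimensions. -/
noncomputable def singVal {r c : ℕ} (A : Matrix (Fin r) (Fin c) ℂ) (n : ℕ) : ℝ :=
  Real.sqrt (nthLargest (Matrix.isHermitian_mul_conjTranspose_self A).eigenvalues n)


lemma singVal_USV {r c : ℕ} (A : Matrix (Fin r) (Fin c) ℂ)
    (U : Matrix (Fin r) (Fin r) ℂ) (V : Matrix (Fin c) (Fin c) ℂ) (d : ℕ → ℝ)
    (hU : Uᴴ * U = 1) (hV : Vᴴ * V = 1)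
    (hmono : ∀ i j : ℕ, i ≤ j → d j ≤ d i) (h0 : ∀ n : ℕ, 0 ≤ d n)
    (hA : A = U * (Matrix.of fun (i : Fin r) (j : Fin c) =>
        if (i : ℕ) = (j : ℕ) then ((d i : ℝ) : ℂ) else 0) * Vᴴ) :
    ∀ n : ℕ, 1 ≤ n → singVal A n = if n ≤ r ∧ n ≤ c then d (n - 1) else 0 := by
  have hUU : U * Uᴴ = 1 := mul_eq_one_comm.mp hU
  have hVV : V * Vᴴ = 1 := mul_eq_one_comm.mp hV
  set e : ℕ → ℝ := fun n => if n < c then d n ^ 2 else 0 with he_def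
  set D := (Matrix.of fun (i : Fin r) (j : Fin c) =>
    if (i : ℕ) = (j : ℕ) then ((d i : ℝ) : ℂ) else 0) with hD
  have hDDh : D * Dᴴ = Matrix.diagonal (fun i : Fin r => ((e i : ℝ) : ℂ)) := by
    rw [hD, diagLike_conjTranspose, diagLike_mul d d e
      (fun n hn => by simp [he_def, hn, sq]) (fun n hn => by simp [he_def, not_lt.mpr hn]),
      diagLike_eq_diagonal]
  have hAA : A * Aᴴ = U * Matrix.diagonal (fun i : Fin r => ((e i : ℝ) : ℂ)) * Uᴴ := by
    rw [hA]
    simp only [Matrix.conjTranspose_mul, Matrix.conjTranspose_conjTranspose, Matrix.mul_assoc]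
    rw [← Matrix.mul_assoc Vᴴ V, hV, Matrix.one_mul, ← hDDh]
    rw [← Matrix.mul_assoc D Dᴴ]
  have hperm : (List.ofFn (Matrix.isHermitian_mul_conjTranspose_self A).eigenvalues).Perm
      (List.ofFn (fun i : Fin r => e (i : ℕ))) :=
    eigs_perm _ hUU hAA _
  have hanti : ∀ i j : Fin r, i ≤ j → e (j : ℕ) ≤ e (i : ℕ) := by
    intro i j hij
    by_cases hjc : (j : ℕ) < c
    · have hic : (i : ℕ) < c := by omega
      simp only [he_def, if_pos hjc, if_pos hic]
      exact pow_le_pow_left₀ (h0 _) (hmono _ _ hij) 2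
    · simp only [he_def, if_neg hjc]
      split
      · exact sq_nonneg _
      · exact le_refl 0
  intro n hn
  unfold singVal
  rw [nthLargest_congr hperm]
  by_cases hnr : n ≤ r
  · rw [nthLargest_of_antitone hanti hn hnr]
    by_cases hnc : n ≤ c
    · rw [if_pos ⟨hnr, hnc⟩]
      show Real.sqrt (e (n - 1)) = d (n - 1)
      rw [he_def]
      simp only [if_pos (show n - 1 < c by omega)]
      exact Real.sqrt_sq (h0 _)
    · rw [if_neg (fun hc => hnc hc.2)]
      show Real.sqrt (e (n - 1)) = 0
      rw [he_def]
      simp only [if_neg (show ¬ n - 1 < c by omega)]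
      exact Real.sqrt_zero
  · rw [if_neg (fun hc => hnr hc.1)]
    unfold nthLargest
    rw [dif_neg (by omega), Real.sqrt_zero]

lemma singVal_nonneg {r c : ℕ} (A : Matrix (Fin r) (Fin c) ℂ) (n : ℕ) : 0 ≤ singVal A n :=
  Real.sqrt_nonneg _

open scoped ComplexOrder in
lemma singVal_anti {r c : ℕ} (A : Matrix (Fin r) (Fin c) ℂ) {a b : ℕ} (ha : 1 ≤ a)
    (hab : a ≤ b) : singVal A b ≤ singVal A a := by
  unfold singVal
  refine Real.sqrt_le_sqrt (nthLargest_anti ?_ ha hab)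
  exact (Matrix.posSemidef_self_mul_conjTranspose A).eigenvalues_nonneg


theorem stmt16 {N_R N_S N_T : ℕ}
    (H_B : Matrix (Fin N_R) (Fin N_S) ℂ) (H_F : Matrix (Fin N_S) (Fin N_T) ℂ)
    -- singular value decompositions `H_B = U_B Σ_B V_Bᴴ` and `H_F = U_F Σ_F V_Fᴴ`,
    -- with the singular values in descending order on the diagonal:
    (U_B : Matrix (Fin N_R) (Fin N_R) ℂ) (V_B : Matrix (Fin N_S) (Fin N_S) ℂ)
    (U_F : Matrix (Fin N_S) (Fin N_S) ℂ) (V_F : Matrix (Fin N_T) (Fin N_T) ℂ)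
    (hUB : U_Bᴴ * U_B = 1) (hVB : V_Bᴴ * V_B = 1)
    (hUF : U_Fᴴ * U_F = 1) (hVF : V_Fᴴ * V_F = 1)
    (hB : H_B = U_B * (Matrix.of fun (i : Fin N_R) (j : Fin N_S) =>
      if (i : ℕ) = (j : ℕ) then ((singVal H_B ((i : ℕ) + 1) : ℝ) : ℂ) else 0) * V_Bᴴ)
    (hF : H_F = U_F * (Matrix.of fun (i : Fin N_S) (j : Fin N_T) =>
      if (i : ℕ) = (j : ℕ) then ((singVal H_F ((i : ℕ) + 1) : ℝ) : ℂ) else 0) * V_Fᴴ) :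
    ∀ n : ℕ, 1 ≤ n →
      singVal (H_B * (V_B * U_Fᴴ) * H_F) n = singVal H_B n * singVal H_F n := by
  set dB : ℕ → ℝ := fun n => singVal H_B (n + 1) with hdB
  set dF : ℕ → ℝ := fun n => singVal H_F (n + 1) with hdF
  have monoB : ∀ i j : ℕ, i ≤ j → dB j ≤ dB i := fun i j hij =>
    singVal_anti H_B (by omega) (by omega)
  have monoF : ∀ i j : ℕ, i ≤ j → dF j ≤ dF i := fun i j hij =>
    singVal_anti H_F (by omega) (by omega)
  have nonnegB : ∀ n : ℕ, 0 ≤ dB n := fun n => singVal_nonneg _ _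
  have nonnegF : ∀ n : ℕ, 0 ≤ dF n := fun n => singVal_nonneg _ _
  have hBres := singVal_USV H_B U_B V_B dB hUB hVB monoB nonnegB hB
  have hFres := singVal_USV H_F U_F V_F dF hUF hVF monoF nonnegF hF
  have hBzero : ∀ n : ℕ, 1 ≤ n → ¬(n ≤ N_R ∧ n ≤ N_S) → singVal H_B n = 0 := by
    intro n hn h
    rw [hBres n hn, if_neg h]
  have hFzero : ∀ n : ℕ, 1 ≤ n → ¬(n ≤ N_S ∧ n ≤ N_T) → singVal H_F n = 0 := by
    intro n hn h
    rw [hFres n hn, if_neg h]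
  set dM : ℕ → ℝ := fun n => dB n * dF n with hdM
  have monoM : ∀ i j : ℕ, i ≤ j → dM j ≤ dM i := fun i j hij =>
    mul_le_mul (monoB i j hij) (monoF i j hij) (nonnegF j) (nonnegB i)
  have nonnegM : ∀ n : ℕ, 0 ≤ dM n := fun n => mul_nonneg (nonnegB n) (nonnegF n)
  have hM : H_B * (V_B * U_Fᴴ) * H_F = U_B * (Matrix.of fun (i : Fin N_R) (j : Fin N_T) =>
      if (i : ℕ) = (j : ℕ) then ((dM (i : ℕ) : ℝ) : ℂ) else 0) * V_Fᴴ := by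
    conv_lhs => rw [hB, hF]
    simp only [Matrix.mul_assoc]
    rw [← Matrix.mul_assoc V_Bᴴ V_B, hVB, Matrix.one_mul,
      ← Matrix.mul_assoc U_Fᴴ U_F, hUF, Matrix.one_mul]
    rw [← Matrix.mul_assoc
      (Matrix.of fun (i : Fin N_R) (j : Fin N_S) =>
        if (i : ℕ) = (j : ℕ) then ((dB (i : ℕ) : ℝ) : ℂ) else 0)
      (Matrix.of fun (i : Fin N_S) (j : Fin N_T) =>
        if (i : ℕ) = (j : ℕ) then ((dF (i : ℕ) : ℝ) : ℂ) else 0)]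
    rw [diagLike_mul dB dF dM (fun n _ => rfl)
      (fun n hns => by
        have h0 : dF n = 0 := hFzero (n + 1) (by omega) (by omega)
        show dB n * dF n = 0
        rw [h0, mul_zero])]
  have hMres := singVal_USV _ U_B V_F dM hUB hVF monoM nonnegM hM
  intro n hn
  rw [hMres n hn]
  by_cases h : n ≤ N_R ∧ n ≤ N_T
  · rw [if_pos h]
    show dB (n - 1) * dF (n - 1) = _
    rw [hdB, hdF]
    simp only [Nat.sub_add_cancel hn]
  · rw [if_neg h]
    rcases not_and_or.mp h with h1 | h1
    · rw [hBzero n hn (fun hc => h1 hc.1), zero_mul]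
    · rw [hFzero n hn (fun hc => h1 hc.2), mul_zero]
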